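/- Let X be a path-connected space, p ∈ X, and suppose q : E → X is a fibration whose fibers are all totally path disconnected and whose total space E is simply connected. Then the topological fundamental group π₁(X,p) is totally path disconnected. Moreover, fixing e ∈ E with q(e) = p, the map sending the class of a loop α ∈ C_p(X) to the endpoint F̃(α,1) of the unique lift of α starting at e is a well-defined continuous injection g : π₁(X,p) → q⁻¹(p). -/

import Mathlib

open Set Topology unitInterval

noncomputable section

/-- The loop space `C_p(X)`: continuous maps `f : [0,1] → X` with `f 0 = f 1 = p`,
with the topology of uniform convergence (the compact-open topology on `C(I,X)`,
which agrees with uniform convergence for metric `X`). -/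
def LoopSp (X : Type) [TopologicalSpace X] (p : X) : Type :=
  {f : C(unitInterval, X) // f 0 = p ∧ f 1 = p}

instance (X : Type) [TopologicalSpace X] (p : X) : TopologicalSpace (LoopSp X p) :=
  inferInstanceAs (TopologicalSpace {f : C(unitInterval, X) // f 0 = p ∧ f 1 = p})

/-- The topological fundamental group `π₁(X,p)`: the set of path components of the
loop space `C_p(X)`, with the quotient topology. -/
def TopPi1 (X : Type) [TopologicalSpace X] (p : X) : Type :=
  @Quotient (LoopSp X p) (pathSetoid _)

instance (X : Type) [TopologicalSpace X] (p : X) : TopologicalSpace (TopPi1 X p) :=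
  inferInstanceAs (TopologicalSpace (@Quotient (LoopSp X p) (pathSetoid _)))

/-- The class in `π₁(X,p)` of a loop. -/
def TopPi1.mk {X : Type} [TopologicalSpace X] {p : X} (f : LoopSp X p) : TopPi1 X p :=
  @Quotient.mk _ (pathSetoid _) f

/-- A continuous map sending `p` to `q` induces a map on loops. -/
def LoopSp.map {X Y : Type} [TopologicalSpace X] [TopologicalSpace Y] {p : X} {q : Y}
    (f : C(X, Y)) (hf : f p = q) : LoopSp X p → LoopSp Y q :=
  fun α => ⟨f.comp α.1, by simp [α.2.1, α.2.2, hf]⟩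

lemma LoopSp.continuous_map {X Y : Type} [TopologicalSpace X] [TopologicalSpace Y]
    {p : X} {q : Y} (f : C(X, Y)) (hf : f p = q) :
    Continuous (LoopSp.map f hf) :=
  Continuous.subtype_mk ((ContinuousMap.continuous_postcomp f).comp continuous_subtype_val) _

/-- The homomorphism `f_* : π₁(X,p) → π₁(Y,q)` induced by a continuous map `f` with
`f p = q`, namely `f_*[α] = [f ∘ α]`. -/
def TopPi1.map {X Y : Type} [TopologicalSpace X] [TopologicalSpace Y] {p : X} {q : Y}
    (f : C(X, Y)) (hf : f p = q) : TopPi1 X p → TopPi1 Y q :=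
  @Quotient.map _ _ (pathSetoid _) (pathSetoid _) (LoopSp.map f hf)
    (fun _ _ h => ⟨h.somePath.map (LoopSp.continuous_map f hf)⟩)

/-- A space is totally path disconnected if each of its path components is a single point. -/
def IsTotallyPathDisconnected (Y : Type) [TopologicalSpace Y] : Prop :=
  ∀ x y : Y, Joined x y → x = y

/-- A continuous surjection is a (Hurewicz) fibration if it has the homotopy lifting
property with respect to all spaces. -/
def IsFibration {E B : Type} [TopologicalSpace E] [TopologicalSpace B] (q : E → B) : Prop :=
  Function.Surjective q ∧ Continuous q ∧
    ∀ (Y : Type) [TopologicalSpace Y] (f : Y → E) (F : Y × unitInterval → B),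
      Continuous f → Continuous F → (∀ y, F (y, 0) = q (f y)) →
      ∃ G : Y × unitInterval → E, Continuous G ∧ (∀ z, q (G z) = F z) ∧
        ∀ y, G (y, 0) = f y

end
-- auxiliary lemmas (to be inserted before stmt12)
section AuxLemmas

set_option linter.unnecessarySimpa false

def LoopSp.toPath {Y : Type} [TopologicalSpace Y] {y : Y} (L : LoopSp Y y) : Path y y :=
  ⟨L.1, L.2.1, L.2.2⟩

lemma joined_toHomotopic {Y : Type} [TopologicalSpace Y] {y : Y} {L₁ L₂ : LoopSp Y y}
    (h : Joined L₁ L₂) : (LoopSp.toPath L₁).Homotopic (LoopSp.toPath L₂) := by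
  obtain ⟨P⟩ := h
  refine ⟨⟨⟨ContinuousMap.uncurry ⟨fun s => (P s).1,
      continuous_subtype_val.comp P.continuous⟩, ?_, ?_⟩, ?_⟩⟩
  · intro t
    show ((P 0).1 : C(unitInterval,Y)) t = _
    simp [P.source, LoopSp.toPath]
  · intro t
    show ((P 1).1 : C(unitInterval,Y)) t = _
    simp [P.target, LoopSp.toPath]
  · intro s t ht
    rcases ht with h0 | h1
    · subst h0
      show ((P s).1 : C(unitInterval,Y)) 0 = (LoopSp.toPath L₁).toContinuousMap 0
      rw [(P s).2.1]
      show y = (LoopSp.toPath L₁) 0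
      simp [LoopSp.toPath, L₁.2.1]
    · simp only [Set.mem_singleton_iff] at h1; subst h1
      show ((P s).1 : C(unitInterval,Y)) 1 = (LoopSp.toPath L₁).toContinuousMap 1
      rw [(P s).2.2]
      show y = (LoopSp.toPath L₁) 1
      simp [LoopSp.toPath, L₁.2.2]

lemma homotopic_toJoined {Y : Type} [TopologicalSpace Y] {y : Y} {L₁ L₂ : LoopSp Y y}
    (h : (LoopSp.toPath L₁).Homotopic (LoopSp.toPath L₂)) : Joined L₁ L₂ := by
  obtain ⟨H⟩ := h
  have h0 : ∀ s : unitInterval, H.toContinuousMap.curry s 0 = y := by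
    intro s
    have := H.eq_fst s (show (0:unitInterval) ∈ ({0,1} : Set unitInterval) from Or.inl rfl)
    show H ((s, 0) : unitInterval × unitInterval) = y
    simpa [LoopSp.toPath, L₁.2.1, L₁.2.2] using this
  have h1 : ∀ s : unitInterval, H.toContinuousMap.curry s 1 = y := by
    intro s
    have := H.eq_fst s (show (1:unitInterval) ∈ ({0,1} : Set unitInterval) from Or.inr rfl)
    show H ((s, 1) : unitInterval × unitInterval) = y
    simpa [LoopSp.toPath, L₁.2.1, L₁.2.2] using this
  refine ⟨⟨⟨fun s => ⟨H.toContinuousMap.curry s, h0 s, h1 s⟩, ?_⟩, ?_, ?_⟩⟩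
  · exact Continuous.subtype_mk H.toContinuousMap.curry.continuous _
  · apply Subtype.ext
    apply ContinuousMap.ext; intro t
    show H (0, t) = _
    simpa [LoopSp.toPath] using H.apply_zero t
  · apply Subtype.ext
    apply ContinuousMap.ext; intro t
    show H (1, t) = _
    simpa [LoopSp.toPath] using H.apply_one t

variable {E X : Type} [TopologicalSpace E] [TopologicalSpace X] {q : E → X}

omit [TopologicalSpace X] in
lemma fiber_const (hfib : ∀ x : X, IsTotallyPathDisconnected (↥(q ⁻¹' {x})))
    {φ : unitInterval → E} (hφ : Continuous φ) {x : X} (h : ∀ t, q (φ t) = x) :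
    φ 0 = φ 1 := by
  have key : (⟨φ 0, h 0⟩ : ↥(q ⁻¹' {x})) = ⟨φ 1, h 1⟩ := by
    apply hfib x
    exact ⟨⟨⟨fun t => ⟨φ t, h t⟩, Continuous.subtype_mk hφ _⟩, rfl, rfl⟩⟩
  exact congrArg Subtype.val key

lemma endpoint_unique (hq : IsFibration q)
    (hfib : ∀ x : X, IsTotallyPathDisconnected (↥(q ⁻¹' {x})))
    {β β' : unitInterval → E} (hβ : Continuous β) (hβ' : Continuous β')
    (hpr : ∀ t, q (β t) = q (β' t)) (hst : β 0 = β' 0) : β 1 = β' 1 := by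
  set a : Path (β 0) (β 1) := ⟨⟨β, hβ⟩, rfl, rfl⟩ with ha
  set a' : Path (β 0) (β' 1) := ⟨⟨β', hβ'⟩, hst.symm, rfl⟩ with ha'
  set δ : Path (β 1) (β' 1) := a.symm.trans a' with hδ
  set c : Path (q (β 0)) (q (β 1)) := a.map hq.2.1 with hc
  set H := Path.Homotopy.reflSymmTrans c with hH
  have hqδ : ∀ t, q (δ t) = (c.symm.trans c) t := by
    intro t
    rw [hδ, Path.trans_apply, Path.trans_apply]
    split_ifs with h
    · simp [Path.symm_apply, ha, hc, Path.map_coe]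
    · show q (β' _) = q (β _)
      exact (hpr _).symm
  set F : unitInterval × unitInterval → X := fun z => H (σ z.2, z.1) with hF
  have hFc : Continuous F := H.continuous.comp (by fun_prop)
  obtain ⟨G, hGc, hGq, hG0⟩ := hq.2.2 unitInterval δ F δ.continuous hFc (by
    intro t
    show H (σ 0, t) = q (δ t)
    rw [unitInterval.symm_zero, hqδ]
    exact H.apply_one t)
  have h0' : ∀ s, q (G (0, s)) = q (β 1) := fun s => (hGq (0, s)).trans (by
    show H (σ s, 0) = q (β 1)
    simpa using H.eq_fst (σ s) (Or.inl rfl))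
  have h1' : ∀ s, q (G (1, s)) = q (β 1) := fun s => (hGq (1, s)).trans (by
    show H (σ s, 1) = q (β 1)
    simpa using H.eq_fst (σ s)
      (show (1 : unitInterval) ∈ ({0, 1} : Set unitInterval) from Or.inr rfl))
  have ht' : ∀ t, q (G (t, 1)) = q (β 1) := fun t => (hGq (t, 1)).trans (by
    show H (σ 1, t) = q (β 1)
    rw [unitInterval.symm_one]
    exact H.apply_zero t)
  have e0 : G (0, 0) = G (0, 1) :=
    fiber_const hfib (hGc.comp (continuous_const.prodMk continuous_id)) h0'
  have e1 : G (1, 0) = G (1, 1) :=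
    fiber_const hfib (hGc.comp (continuous_const.prodMk continuous_id)) h1'
  have etop : G (0, 1) = G (1, 1) :=
    fiber_const hfib (hGc.comp (continuous_id.prodMk continuous_const)) ht'
  calc β 1 = δ 0 := δ.source.symm
    _ = G (0, 0) := (hG0 0).symm
    _ = G (0, 1) := e0
    _ = G (1, 1) := etop
    _ = G (1, 0) := e1.symm
    _ = δ 1 := hG0 1
    _ = β' 1 := δ.target

end AuxLemmas

/-- Suppose `X` is a path-connected space, `p ∈ X`, and `q : E → X` is a fibration all
of whose fibres are totally path disconnected and whose total space `E` is simply
connected (path connected with trivial fundamental group). Then `π₁(X,p)` is totally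
path disconnected; moreover, fixing `e ∈ E` with `q e = p`, the map sending the class
of a loop `α` to the endpoint of the (unique) lift of `α` starting at `e` is a
well-defined continuous injection `g : π₁(X,p) → q⁻¹(p)`. -/
theorem stmt12 (X : Type) [TopologicalSpace X] [PathConnectedSpace X] (p : X)
    (E : Type) [TopologicalSpace E] (q : E → X)
    (hq : IsFibration q)
    (hfib : ∀ x : X, IsTotallyPathDisconnected (↥(q ⁻¹' {x})))
    (hpcE : PathConnectedSpace E)
    (htrivE : ∀ e : E, Subsingleton (TopPi1 E e))
    (e : E) (he : q e = p) :
    IsTotallyPathDisconnected (TopPi1 X p) ∧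
      ∃ g : TopPi1 X p → ↥(q ⁻¹' {p}),
        Continuous g ∧ Function.Injective g ∧
        ∀ (α : LoopSp X p) (β : C(unitInterval, E)),
          (∀ t, q (β t) = α.1 t) → β 0 = e →
          (g (TopPi1.mk α)).1 = β 1 := by
  classical
  -- the evaluation map on the loop space, as a continuous map
  have hFevc : Continuous (fun z : LoopSp X p × unitInterval => (z.1.1 : C(unitInterval, X)) z.2) :=
    (ContinuousMap.uncurry
      (⟨fun α : LoopSp X p => α.1, continuous_subtype_val⟩ : C(LoopSp X p, C(unitInterval, X)))).continuous
  -- lift the evaluation homotopy through the fibration, starting at the constant map `e`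
  obtain ⟨G, hGc, hGq, hG0⟩ := hq.2.2 (LoopSp X p) (fun _ => e)
    (fun z => (z.1.1 : C(unitInterval, X)) z.2) continuous_const hFevc
    (fun α => (α.2.1).trans he.symm)
  have hend : ∀ α : LoopSp X p, q (G (α, 1)) = p := fun α => (hGq (α, 1)).trans α.2.2
  set g0 : LoopSp X p → ↥(q ⁻¹' {p}) := fun α => ⟨G (α, 1), hend α⟩ with hg0def
  have hg0c : Continuous g0 :=
    Continuous.subtype_mk (hGc.comp (continuous_id.prodMk continuous_const)) _
  have hsound : ∀ α α' : LoopSp X p, Joined α α' → g0 α = g0 α' := by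
    intro α α' hαα'
    obtain ⟨P⟩ := hαα'
    exact hfib p _ _ ⟨P.map hg0c⟩
  set g : TopPi1 X p → ↥(q ⁻¹' {p}) :=
    @Quotient.lift _ _ (pathSetoid (LoopSp X p)) g0 hsound with hgdef
  have hgc : Continuous g := hg0c.quotient_lift hsound
  -- the "moreover" clause
  have hmore : ∀ (α : LoopSp X p) (β : C(unitInterval, E)),
      (∀ t, q (β t) = α.1 t) → β 0 = e → (g (TopPi1.mk α)).1 = β 1 := by
    intro α β hβq hβ0
    show G (α, 1) = β 1
    exact endpoint_unique hq hfib (hGc.comp (continuous_const.prodMk continuous_id))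
      β.continuous (fun t => (hGq (α, t)).trans (hβq t).symm) ((hG0 α).trans hβ0.symm)
  -- injectivity
  have hinj : Function.Injective g := by
    intro c d
    refine Quotient.inductionOn₂ c d ?_
    intro α α' hgeq
    have hx : G (α, 1) = G (α', 1) := congrArg Subtype.val hgeq
    set γ : Path e (G (α, 1)) :=
      ⟨⟨fun t => G (α, t), hGc.comp (continuous_const.prodMk continuous_id)⟩, hG0 α, rfl⟩ with hγ
    set γ' : Path e (G (α, 1)) :=
      ⟨⟨fun t => G (α', t), hGc.comp (continuous_const.prodMk continuous_id)⟩, hG0 α', hx.symm⟩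
      with hγ'
    -- loops at `e` in `E` are all homotopic
    have hsub : ∀ γ₁ γ₂ : Path e e, γ₁.Homotopic γ₂ := by
      intro γ₁ γ₂
      have h := @Subsingleton.elim (TopPi1 E e) (htrivE e)
        (TopPi1.mk ⟨γ₁.toContinuousMap, γ₁.source, γ₁.target⟩)
        (TopPi1.mk ⟨γ₂.toContinuousMap, γ₂.source, γ₂.target⟩)
      have hj : Joined (⟨γ₁.toContinuousMap, γ₁.source, γ₁.target⟩ : LoopSp E e)
          ⟨γ₂.toContinuousMap, γ₂.source, γ₂.target⟩ := Quotient.exact h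
      exact joined_toHomotopic hj
    have hsubq : Subsingleton (Path.Homotopic.Quotient e e) :=
      ⟨fun u v => Quotient.inductionOn₂ u v fun γ₁ γ₂ => Quotient.sound (hsub γ₁ γ₂)⟩
    -- groupoid argument: γ and γ' are homotopic rel endpoints
    have hhom : γ.Homotopic γ' := by
      let a : (⟨e⟩ : FundamentalGroupoid E) ⟶ ⟨G (α, 1)⟩ := ⟦γ⟧
      let b : (⟨e⟩ : FundamentalGroupoid E) ⟶ ⟨G (α, 1)⟩ := ⟦γ'⟧
      have h1 := @Subsingleton.elim ((⟨e⟩ : FundamentalGroupoid E) ⟶ ⟨e⟩) hsubq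
        (CategoryTheory.CategoryStruct.comp a (CategoryTheory.inv b))
        (CategoryTheory.CategoryStruct.id _)
      have key : a = b := by
        calc a = CategoryTheory.CategoryStruct.comp
              (CategoryTheory.CategoryStruct.comp a (CategoryTheory.inv b)) b := by simp
          _ = CategoryTheory.CategoryStruct.comp (CategoryTheory.CategoryStruct.id _) b := by
              rw [h1]
          _ = b := CategoryTheory.Category.id_comp b
      exact Quotient.exact key
    -- push the homotopy down to `X`
    obtain ⟨Hh⟩ := hhom
    have hhom2 : (LoopSp.toPath α).Homotopic (LoopSp.toPath α') := by
      refine ⟨⟨⟨(⟨q, hq.2.1⟩ : C(E, X)).comp Hh.toContinuousMap, ?_, ?_⟩, ?_⟩⟩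
      · intro t
        show q (Hh (0, t)) = (LoopSp.toPath α) t
        rw [Hh.apply_zero]
        exact hGq (α, t)
      · intro t
        show q (Hh (1, t)) = (LoopSp.toPath α') t
        rw [Hh.apply_one]
        exact hGq (α', t)
      · intro s t ht
        rcases ht with h0 | h1
        · subst h0
          show q (Hh (s, 0)) = (LoopSp.toPath α).toContinuousMap 0
          rw [Hh.eq_fst s (Or.inl rfl)]
          exact hGq (α, 0)
        · simp only [Set.mem_singleton_iff] at h1; subst h1
          show q (Hh (s, 1)) = (LoopSp.toPath α).toContinuousMap 1
          rw [Hh.eq_fst s (Or.inr rfl)]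
          exact hGq (α, 1)
    exact Quotient.sound (homotopic_toJoined hhom2)
  refine ⟨?_, g, hgc, hinj, hmore⟩
  intro c d hJ
  obtain ⟨P⟩ := hJ
  exact hinj (hfib p _ _ ⟨P.map hgc⟩)
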